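/- Let p be a prime and n ≥ 1 with p not dividing n. Let A be an n×n matrix over F_p = ZMod p that achieves average consensus (A is row-stochastic, 𝟙ᵀ A = 𝟙ᵀ, and its characteristic polynomial is X^{n−1}(X−1)). Let B be an m×n matrix over F_p with B 𝟙 = 0, let L be an n×m matrix over F_p with L · B = I − A, fix v ∈ F_p^n and set η = B v. Then for every initial state x(0) ∈ F_p^n, the iteration x(t+1) = A x(t) + L η converges in finite time: there exist T < n and x̃ ∈ F_p^n such that x(t) = x̃ for all t ≥ T, and the limit is compatible with the measurements: B x̃ = η (equivalently, x̃ − v is a constant vector). -/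

import Mathlib

open Matrix Polynomial


lemma aux_charpoly (p n : ℕ) [Fact p.Prime] (hn : 1 ≤ n) (c : ZMod p)
    (hc : c * (n : ZMod p) = 1)
    (A : Matrix (Fin n) (Fin n) (ZMod p))
    (hrow : A *ᵥ (1 : Fin n → ZMod p) = 1)
    (hchar : A.charpoly = X ^ (n - 1) * (X - 1)) :
    (A - c • Matrix.of (fun _ _ : Fin n => (1 : ZMod p))).charpoly
      = (X : (ZMod p)[X]) ^ n := by
  classical
  set M := A - c • Matrix.of (fun _ _ : Fin n => (1 : ZMod p)) with hM
  set K := RatFunc (ZMod p)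
  set φ : (ZMod p)[X] →+* K := (algebraMap (ZMod p)[X] K : (ZMod p)[X] →+* K) with hφdef
  have hφ : Function.Injective φ := IsFractionRing.injective (ZMod p)[X] K
  set A' : Matrix (Fin n) (Fin n) K := (charmatrix A).map φ with hA'
  have hdetA' : A'.det = φ A.charpoly := ((RingHom.map_det φ (charmatrix A))).symm
  have hXone : (X : (ZMod p)[X]) ^ (n - 1) * (X - 1) ≠ 0 := by
    apply mul_ne_zero (pow_ne_zero _ X_ne_zero)
    intro h
    have := congrArg (fun q => Polynomial.coeff q 1) h
    simp [Polynomial.coeff_one] at this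
  have hAunit : IsUnit A'.det := by
    rw [hdetA', hchar]
    exact isUnit_iff_ne_zero.2 (fun h => hXone (hφ (by simpa using h)))
  -- row sums of charmatrix A
  have hrowsum : ∀ i : Fin n, ∑ k, charmatrix A i k = X - 1 := by
    intro i
    have h1 : (A *ᵥ (1 : Fin n → ZMod p)) i = 1 := congrFun hrow i
    have h2 : ∑ k, A i k = 1 := by
      simpa [Matrix.mulVec, dotProduct] using h1
    calc ∑ k, charmatrix A i k
        = ∑ k, ((Matrix.diagonal fun _ : Fin n => (X : (ZMod p)[X])) i k - C (A i k)) := by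
          simp [charmatrix_apply]
      _ = X - C (∑ k, A i k) := by
          rw [Finset.sum_sub_distrib]
          simp [Matrix.diagonal_apply, Finset.sum_ite_eq]
      _ = X - 1 := by rw [h2]; simp
  have hA'one : A' *ᵥ (fun _ => (1:K)) = fun _ => φ (X - 1) := by
    funext i
    simp only [Matrix.mulVec, dotProduct, hA', Matrix.map_apply, mul_one]
    rw [← map_sum φ, hrowsum i]
  have hinvsum : ∀ j : Fin n, φ (X - 1) * (∑ k, A'⁻¹ j k) = 1 := by
    intro j
    have h2 : A'⁻¹ *ᵥ (A' *ᵥ (fun _ => (1:K))) = fun _ => (1:K) := by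
      rw [Matrix.mulVec_mulVec, Matrix.nonsing_inv_mul _ hAunit, Matrix.one_mulVec]
    rw [hA'one] at h2
    have h3 := congrFun h2 j
    simp only [Matrix.mulVec, dotProduct] at h3
    rw [Finset.mul_sum]
    simpa [mul_comm] using h3
  -- matrix determinant lemma
  set u : Fin n → K := fun _ => φ (C c) with hu
  set N : Matrix (Fin n) (Fin n) K :=
    A' + Matrix.replicateCol Unit u * Matrix.replicateRow Unit (fun _ => (1:K)) with hNdef
  have hN : N = (charmatrix M).map φ := by
    ext i j
    have hMij : M i j = A i j - c := by
      simp [hM, Matrix.sub_apply, Matrix.smul_apply]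
    have hchm : charmatrix M i j = charmatrix A i j + C c := by
      by_cases h : i = j
      · subst h
        rw [charmatrix_apply_eq, charmatrix_apply_eq, hMij, map_sub]
        ring
      · rw [charmatrix_apply_ne _ _ _ h, charmatrix_apply_ne _ _ _ h, hMij, map_sub]
        ring
    simp [hNdef, Matrix.map_apply, hchm, Matrix.replicateCol, Matrix.replicateRow, Matrix.mul_apply, hA', hu]
  set S : K := ∑ j, ∑ k, A'⁻¹ j k with hS
  have hdetN : N.det = A'.det * (1 + φ (C c) * S) := by
    rw [hNdef, Matrix.det_add_replicateCol_mul_replicateRow hAunit]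
    congr 1
    rw [Matrix.det_unique]
    simp only [Matrix.add_apply, Matrix.one_apply_eq, Matrix.mul_apply,
      Matrix.replicateCol_apply, Matrix.replicateRow_apply, Finset.univ_unique]
    congr 1
    have hterm : ∀ xx : Fin n, (∑ y, 1 * A'⁻¹ y xx) * u xx = ∑ y, φ (C c) * A'⁻¹ y xx := by
      intro xx
      rw [Finset.sum_mul, hu]
      simp [mul_comm]
    rw [Finset.sum_congr rfl (fun xx _ => hterm xx), Finset.sum_comm, hS, Finset.mul_sum]
    simp [Finset.mul_sum]
  have hXS : φ (X - 1) * S = (n : K) := by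
    rw [hS, Finset.mul_sum]
    rw [Finset.sum_congr rfl (fun j _ => hinvsum j)]
    simp
  have hcS : φ (C c) * (n : K) = 1 := by
    have : ((n : (ZMod p)[X]) : (ZMod p)[X]) = C (n : ZMod p) := by
      simp [Polynomial.C_eq_natCast]
    calc φ (C c) * (n : K) = φ (C c) * φ (n : (ZMod p)[X]) := by rw [map_natCast]
      _ = φ (C c * C (n : ZMod p)) := by rw [_root_.map_mul, this]
      _ = φ (C (c * (n : ZMod p))) := by rw [← C_mul]
      _ = 1 := by rw [hc]; simp
  have hfinal : φ (M.charpoly) = φ ((X : (ZMod p)[X]) ^ n) := by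
    have h1 : φ (M.charpoly) = N.det := by
      rw [hN]
      exact RingHom.map_det φ M.charmatrix
    rw [h1, hdetN, hdetA', hchar]
    have h2 : φ ((X : (ZMod p)[X]) ^ (n - 1) * (X - 1)) * (1 + φ (C c) * S)
        = φ ((X : (ZMod p)[X]) ^ (n - 1)) * (φ (X - 1) * (1 + φ (C c) * S)) := by
      rw [_root_.map_mul]; ring
    rw [h2]
    have h3 : φ ((X : (ZMod p)[X]) - 1) * (1 + φ (C c) * S) = φ X := by
      have : φ ((X : (ZMod p)[X]) - 1) * (1 + φ (C c) * S)
          = φ (X - 1) + φ (C c) * (φ (X - 1) * S) := by ring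
      rw [this, hXS, hcS]
      calc φ ((X : (ZMod p)[X]) - 1) + 1 = φ ((X - 1) + 1) := by
            rw [_root_.map_add, _root_.map_one]
        _ = φ X := by norm_num
    rw [h3, ← _root_.map_mul, ← pow_succ, Nat.sub_add_cancel hn]
  exact hφ hfinal

/-- Distributed pose estimation with perfect measurements: if `A` achieves
average consensus over `ZMod p` (row-stochastic, column-stochastic, with
characteristic polynomial `X^(n-1)(X-1)`), `B 𝟙 = 0`, `L * B = I - A`, and the
measurements are `η = B *ᵥ v`, then the iteration
`x(t+1) = A x(t) + L η` converges in finite time `T < n` to a configuration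
`x̃` compatible with the measurements: `B *ᵥ x̃ = η`. -/
theorem finiteField_pose_estimation_noiseless
    (p n m : ℕ) [Fact p.Prime] (hn : 1 ≤ n) (hpn : ¬ p ∣ n)
    (A : Matrix (Fin n) (Fin n) (ZMod p))
    (hrow : A *ᵥ (1 : Fin n → ZMod p) = 1)
    (hcol : (1 : Fin n → ZMod p) ᵥ* A = 1)
    (hchar : A.charpoly = X ^ (n - 1) * (X - 1))
    (B : Matrix (Fin m) (Fin n) (ZMod p))
    (hB : B *ᵥ (1 : Fin n → ZMod p) = 0)
    (L : Matrix (Fin n) (Fin m) (ZMod p))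
    (hL : L * B = 1 - A)
    (v : Fin n → ZMod p)
    (x : ℕ → Fin n → ZMod p)
    (hx : ∀ t : ℕ, x (t + 1) = A *ᵥ x t + L *ᵥ (B *ᵥ v)) :
    ∃ T : ℕ, T < n ∧ ∃ xtilde : Fin n → ZMod p,
      (∀ t ≥ T, x t = xtilde) ∧ B *ᵥ xtilde = B *ᵥ v := by
  classical
  have hn0 : (n : ZMod p) ≠ 0 := by
    simpa [ZMod.natCast_eq_zero_iff] using hpn
  set c : ZMod p := (n : ZMod p)⁻¹ with hcdef
  have hc : c * (n : ZMod p) = 1 := inv_mul_cancel₀ hn0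
  set Q : Matrix (Fin n) (Fin n) (ZMod p) := Matrix.of (fun _ _ => (1 : ZMod p)) with hQdef
  set M : Matrix (Fin n) (Fin n) (ZMod p) := A - c • Q with hMdef
  -- basic facts about Q
  have hrowsum : ∀ i, ∑ k, A i k = 1 := by
    intro i
    simpa [Matrix.mulVec, dotProduct] using congrFun hrow i
  have hcolsum : ∀ j, ∑ k, A k j = 1 := by
    intro j
    simpa [Matrix.vecMul, dotProduct] using congrFun hcol j
  have hAQ : A * Q = Q := by
    ext i j
    simp [Matrix.mul_apply, hQdef, hrowsum i]
  have hQA : Q * A = Q := by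
    ext i j
    simp [Matrix.mul_apply, hQdef, hcolsum j]
  have hQQ : Q * Q = (n : ZMod p) • Q := by
    ext i j
    simp [Matrix.mul_apply, hQdef, Finset.card_univ]
  -- M is nilpotent
  have hchM : M.charpoly = (X : (ZMod p)[X]) ^ n :=
    aux_charpoly p n hn c hc A hrow hchar
  have hMn : M ^ n = 0 := by
    have h0 := M.aeval_self_charpoly
    rwa [hchM, map_pow, aeval_X] at h0
  have hMQ : M * Q = 0 := by
    rw [hMdef, Matrix.sub_mul, Matrix.smul_mul, hAQ, hQQ]
    rw [smul_smul, hc, one_smul, sub_self]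
  have hQM : Q * M = 0 := by
    rw [hMdef, Matrix.mul_sub, Matrix.mul_smul, hQA, hQQ]
    rw [smul_smul, hc, one_smul, sub_self]
  -- powers of A
  have hpow : ∀ k, 1 ≤ k → A ^ k = c • Q + M ^ k := by
    intro k hk
    induction k, hk using Nat.le_induction with
    | base => simp [hMdef, pow_one]
    | succ k hk ih =>
      have hMkQ : M ^ k * Q = 0 := by
        obtain ⟨j, rfl⟩ := Nat.exists_eq_add_of_le hk
        rw [add_comm, pow_add, pow_one, Matrix.mul_assoc, hMQ, Matrix.mul_zero]
      have hA : A = c • Q + M := by simp [hMdef]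
      calc A ^ (k + 1) = A ^ k * A := pow_succ A k
        _ = (c • Q + M ^ k) * (c • Q + M) := by rw [ih, ← hA]
        _ = c • Q + M ^ (k + 1) := by
            have e1 : (c • Q) * (c • Q) = c • Q := by
              rw [Matrix.smul_mul, Matrix.mul_smul, hQQ, smul_smul, smul_smul, mul_assoc, hc, mul_one]
            have e2 : (c • Q) * M = 0 := by rw [Matrix.smul_mul, hQM, smul_zero]
            have e3 : M ^ k * (c • Q) = 0 := by rw [Matrix.mul_smul, hMkQ, smul_zero]
            rw [Matrix.add_mul, Matrix.mul_add, Matrix.mul_add, e1, e2, e3, ← pow_succ]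
            simp
  have hAn : A ^ n = c • Q := by
    rw [hpow n hn, hMn, add_zero]
  -- Cayley-Hamilton for A : A^(n-1) = A^n
  have hCH : A ^ (n - 1) = c • Q := by
    have h0 := A.aeval_self_charpoly
    rw [hchar, _root_.map_mul, map_pow, aeval_X, map_sub, aeval_X, _root_.map_one] at h0
    rw [Matrix.mul_sub, Matrix.mul_one, sub_eq_zero] at h0
    have h2 : A ^ (n - 1) * A = A ^ n := by
      rw [← pow_succ, Nat.sub_add_cancel hn]
    calc A ^ (n - 1) = A ^ (n - 1) * A := h0.symm
      _ = A ^ n := h2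
      _ = c • Q := hAn
  -- stabilization of powers
  have hstab : ∀ t, n - 1 ≤ t → A ^ t = c • Q := by
    intro t ht
    induction t, ht using Nat.le_induction with
    | base => exact hCH
    | succ t ht ih =>
      rw [pow_succ, ih, Matrix.smul_mul, hQA]
  -- closed form for the iteration
  have hxt : ∀ t, x t = v + A ^ t *ᵥ (x 0 - v) := by
    intro t
    induction t with
    | zero => simp
    | succ t ih =>
      have hLB : L *ᵥ (B *ᵥ v) = v - A *ᵥ v := by
        rw [Matrix.mulVec_mulVec, hL, Matrix.sub_mulVec, Matrix.one_mulVec]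
      rw [hx t, ih, hLB, Matrix.mulVec_add, pow_succ']
      rw [← Matrix.mulVec_mulVec]
      abel
  -- the limit
  refine ⟨n - 1, by omega, v + (c • Q) *ᵥ (x 0 - v), ?_, ?_⟩
  · intro t ht
    rw [hxt t, hstab t ht]
  · have hQv : Q *ᵥ (x 0 - v) = (∑ k, (x 0 - v) k) • (1 : Fin n → ZMod p) := by
      funext i
      simp [Matrix.mulVec, dotProduct, hQdef]
    rw [Matrix.mulVec_add, Matrix.smul_mulVec, hQv]
    rw [Matrix.mulVec_smul, Matrix.mulVec_smul, hB]
    simp
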